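/- A graph is a partial (l,k)-tree if and only if it has a tree-decomposition of width (l,k), i.e., a tree-decomposition in which every bag has at most k vertices and any two distinct bags intersect in at most l vertices. -/

import Mathlib

set_option linter.unusedSectionVars false
set_option linter.unusedVariables false
set_option maxHeartbeats 1000000


/-- A relational structure over signature `σ` with arities `ar`, on domain `D`:
an interpretation of each relation symbol. -/
def RelStruct (σ : Type) (ar : σ → ℕ) (D : Type) : Type :=
  ∀ s : σ, (Fin (ar s) → D) → Prop

variable {σ : Type} {ar : σ → ℕ}

/-- `f` is a homomorphism from `A` to `B`. -/
def IsHom {D₁ D₂ : Type} (A : RelStruct σ ar D₁) (B : RelStruct σ ar D₂)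
    (f : D₁ → D₂) : Prop :=
  ∀ s x, A s x → B s (f ∘ x)

/-- `f` is a strong homomorphism from `A` to `B`. -/
def IsStrongHom {D₁ D₂ : Type} (A : RelStruct σ ar D₁) (B : RelStruct σ ar D₂)
    (f : D₁ → D₂) : Prop :=
  ∀ s x, A s x ↔ B s (f ∘ x)

/-- An embedding is an injective strong homomorphism. -/
def IsEmbedding {D₁ D₂ : Type} (A : RelStruct σ ar D₁) (B : RelStruct σ ar D₂)
    (f : D₁ → D₂) : Prop :=
  Function.Injective f ∧ IsStrongHom A B f

/-- Homomorphic equivalence. -/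
def HomEquiv {D₁ D₂ : Type} (A : RelStruct σ ar D₁) (B : RelStruct σ ar D₂) : Prop :=
  (∃ f, IsHom A B f) ∧ (∃ g, IsHom B A g)

/-- Disjoint union of two structures. -/
def dUnion {D₁ D₂ : Type} (A : RelStruct σ ar D₁) (B : RelStruct σ ar D₂) :
    RelStruct σ ar (D₁ ⊕ D₂) :=
  fun s x => (∃ y, x = Sum.inl ∘ y ∧ A s y) ∨ (∃ y, x = Sum.inr ∘ y ∧ B s y)

/-- The Gaifman graph of a structure. -/
def gaifman {D : Type} (A : RelStruct σ ar D) : SimpleGraph D :=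
  SimpleGraph.fromRel (fun u v => ∃ s x, A s x ∧ (∃ i, x i = u) ∧ (∃ j, x j = v))

/-- Substructure induced on a subset of the domain. -/
def induceStruct {D : Type} (A : RelStruct σ ar D) (S : Set D) : RelStruct σ ar S :=
  fun s x => A s (fun i => (x i : D))
/-- The graph obtained from `G` by adding `m` new vertices, each adjacent to all
vertices of `C` and to each other. -/
def glueGraph {V : Type} (G : SimpleGraph V) (C : Finset V) (m : ℕ) :
    SimpleGraph (V ⊕ Fin m) :=
  SimpleGraph.fromRel (fun a b =>
    (∃ u v, a = Sum.inl u ∧ b = Sum.inl v ∧ G.Adj u v) ∨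
    (∃ u j, a = Sum.inl u ∧ b = Sum.inr j ∧ u ∈ C) ∨
    (∃ i j, a = Sum.inr i ∧ b = Sum.inr j))

/-- The class of `(l,k)`-trees: complete graphs on `k` vertices are `(l,k)`-trees,
and one may glue `k - l` new vertices onto an induced `l`-clique so that they form
a `k`-clique together; the class is closed under isomorphism. -/
inductive IsLKTree (l k : ℕ) : {V : Type} → SimpleGraph V → Prop where
  | base {V : Type} [Fintype V] (h : Fintype.card V = k) :
      IsLKTree l k (⊤ : SimpleGraph V)
  | glue {V : Type} (G : SimpleGraph V) (C : Finset V) (hC : C.card = l)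
      (hclique : G.IsClique ↑C) (hG : IsLKTree l k G) :
      IsLKTree l k (glueGraph G C (k - l))
  | iso {V W : Type} (G : SimpleGraph V) (G' : SimpleGraph W)
      (e : G ≃g G') (hG : IsLKTree l k G) : IsLKTree l k G'

/-- A partial `(l,k)`-tree: a (not necessarily induced) subgraph of an `(l,k)`-tree. -/
def IsPartialLKTree (l k : ℕ) {V : Type} (G : SimpleGraph V) : Prop :=
  ∃ (W : Type) (T : SimpleGraph W) (f : V → W),
    IsLKTree l k T ∧ Function.Injective f ∧ ∀ u v, G.Adj u v → T.Adj (f u) (f v)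

/-- A tree-decomposition of a graph `G`, with bags indexed by `ι`. -/
structure TreeDecomp {V : Type} (G : SimpleGraph V) (ι : Type) where
  T : SimpleGraph ι
  isTree : T.IsTree
  bag : ι → Finset V
  mem_bag : ∀ v : V, ∃ i, v ∈ bag i
  edge_cover : ∀ u v, G.Adj u v → ∃ i, u ∈ bag i ∧ v ∈ bag i
  connected : ∀ v : V, (T.induce {i | v ∈ bag i}).Preconnected

/-- A tree-decomposition has width `(l,k)` if every bag has at most `k` vertices
and any two distinct bags intersect in at most `l` vertices. -/
def TreeDecomp.widthLE {V : Type} [DecidableEq V] {G : SimpleGraph V} {ι : Type}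
    (td : TreeDecomp G ι) (l k : ℕ) : Prop :=
  (∀ i, (td.bag i).card ≤ k) ∧ ∀ i j, i ≠ j → (td.bag i ∩ td.bag j).card ≤ l

set_option linter.unusedSectionVars false
set_option linter.unusedVariables false
set_option maxHeartbeats 1000000

open SimpleGraph

section TreeFacts
variable {ι : Type} [DecidableEq ι] {T : SimpleGraph ι}

noncomputable def tpath (ht : T.IsTree) (a b : ι) : T.Walk a b :=
  (ht.existsUnique_path a b).choose

lemma tpath_isPath (ht : T.IsTree) (a b : ι) : (tpath ht a b).IsPath :=
  (ht.existsUnique_path a b).choose_spec.1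

lemma tpath_unique (ht : T.IsTree) {a b : ι} (p : T.Walk a b) (hp : p.IsPath) :
    p = tpath ht a b :=
  (ht.existsUnique_path a b).choose_spec.2 p hp

lemma tpath_length (ht : T.IsTree) (a b : ι) : (tpath ht a b).length = T.dist a b := by
  refine le_antisymm ?_ (SimpleGraph.dist_le _)
  obtain ⟨w, hw⟩ := (ht.isConnected a b).exists_walk_length_eq_dist
  have h1 : w.bypass = tpath ht a b := tpath_unique ht _ (Walk.bypass_isPath w)
  rw [← h1, ← hw]
  exact Walk.length_bypass_le w

lemma tpath_dist_split (ht : T.IsTree) {a b c : ι} (hc : c ∈ (tpath ht a b).support) :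
    T.dist a c + T.dist c b ≤ T.dist a b := by
  rw [← tpath_length ht a b]
  conv_rhs => rw [← Walk.take_spec _ hc]
  rw [Walk.length_append]
  exact Nat.add_le_add (SimpleGraph.dist_le _) (SimpleGraph.dist_le _)

lemma walk_induce_down {s : Set ι} {x y : s} (p : (T.induce s).Walk x y) :
    ∃ q : T.Walk x.val y.val, ∀ z ∈ q.support, z ∈ s := by
  induction p with
  | nil => exact ⟨Walk.nil, by rintro z hz; simp at hz; subst hz; exact Subtype.coe_prop _⟩
  | @cons u v w h p ih =>
    obtain ⟨q, hq⟩ := ih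
    refine ⟨Walk.cons (by simpa using h) q, ?_⟩
    intro z hz
    rw [Walk.support_cons, List.mem_cons] at hz
    rcases hz with rfl | hz
    · exact u.2
    · exact hq z hz

lemma tpath_support_subset (ht : T.IsTree) {s : Set ι}
    (hpre : (T.induce s).Preconnected) {a b : ι} (ha : a ∈ s) (hb : b ∈ s) :
    ∀ x ∈ (tpath ht a b).support, x ∈ s := by
  obtain ⟨pw⟩ := hpre ⟨a, ha⟩ ⟨b, hb⟩
  obtain ⟨q, hq⟩ := walk_induce_down pw
  have h1 : q.bypass = tpath ht a b := tpath_unique ht _ (Walk.bypass_isPath q)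
  intro x hx
  rw [← h1] at hx
  exact hq x (Walk.support_bypass_subset q hx)

lemma tpath_penultimate (ht : T.IsTree) {root b : ι} (hne : b ≠ root) :
    ∃ q, s(q, b) ∈ (tpath ht root b).edges ∧ T.dist root q < T.dist root b := by
  obtain ⟨q, h, p', hp⟩ := Walk.exists_eq_cons_of_ne hne (tpath ht root b).reverse
  have he : s(b, q) ∈ (tpath ht root b).reverse.edges := by
    rw [hp]; simp
  rw [Walk.edges_reverse, List.mem_reverse] at he
  refine ⟨q, by rwa [Sym2.eq_swap], ?_⟩
  have hqs : q ∈ (tpath ht root b).support :=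
    Walk.fst_mem_support_of_mem_edges _ (by rwa [Sym2.eq_swap])
  have h1 : T.dist root q + T.dist q b ≤ T.dist root b := tpath_dist_split ht hqs
  have h2 : T.dist q b = 1 := by
    rw [SimpleGraph.dist_eq_one_iff_adj]; exact h.symm
  omega

lemma tpath_sep (ht : T.IsTree) {root b j : ι}
    (hle : T.dist root j ≤ T.dist root b) (hne : j ≠ b) {q : ι}
    (hq : s(q, b) ∈ (tpath ht root b).edges) : q ∈ (tpath ht j b).support := by
  have hbj : b ∉ (tpath ht root j).support := by
    intro hb
    have h1 : T.dist root b + T.dist b j ≤ T.dist root j := tpath_dist_split ht hb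
    have h2 : T.dist b j = 0 := by omega
    have h3 : b = j := (ht.isConnected b j).dist_eq_zero_iff.mp h2
    exact hne h3.symm
  set w := (tpath ht root j).append (tpath ht j b) with hw
  have h1 : w.bypass = tpath ht root b := tpath_unique ht _ (Walk.bypass_isPath w)
  rw [← h1] at hq
  have h2 : s(q, b) ∈ w.edges := Walk.edges_bypass_subset w hq
  rw [hw, Walk.edges_append, List.mem_append] at h2
  rcases h2 with h2 | h2
  · exact absurd (Walk.snd_mem_support_of_mem_edges _ h2) hbj
  · exact Walk.fst_mem_support_of_mem_edges _ h2

end TreeFacts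

section Glue
variable {V : Type} {G : SimpleGraph V} {C : Finset V} {m : ℕ}

lemma glue_adj_inl_inl {u v : V} :
    (glueGraph G C m).Adj (Sum.inl u) (Sum.inl v) ↔ G.Adj u v := by
  simp only [glueGraph, SimpleGraph.fromRel_adj]
  constructor
  · rintro ⟨hne, h | h⟩
    · rcases h with ⟨a, b, ha, hb, hab⟩ | ⟨a, b, ha, hb, hab⟩ | ⟨a, b, ha, hb⟩ <;> simp_all
    · rcases h with ⟨a, b, ha, hb, hab⟩ | ⟨a, b, ha, hb, hab⟩ | ⟨a, b, ha, hb⟩ <;> simp_all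
      exact hab.symm
  · intro h
    exact ⟨by simpa using h.ne, Or.inl (Or.inl ⟨u, v, rfl, rfl, h⟩)⟩

lemma glue_adj_inl_inr {u : V} {j : Fin m} :
    (glueGraph G C m).Adj (Sum.inl u) (Sum.inr j) ↔ u ∈ C := by
  simp only [glueGraph, SimpleGraph.fromRel_adj]
  constructor
  · rintro ⟨hne, h | h⟩ <;>
      rcases h with ⟨a, b, ha, hb, hab⟩ | ⟨a, b, ha, hb, hab⟩ | ⟨a, b, ha, hb⟩ <;> simp_all
  · intro h
    exact ⟨by simp, Or.inl (Or.inr (Or.inl ⟨u, j, rfl, rfl, h⟩))⟩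

lemma glue_adj_inr_inr {i j : Fin m} :
    (glueGraph G C m).Adj (Sum.inr i) (Sum.inr j) ↔ i ≠ j := by
  simp only [glueGraph, SimpleGraph.fromRel_adj]
  constructor
  · rintro ⟨hne, _⟩
    simpa using hne
  · intro h
    exact ⟨by simpa using h, Or.inl (Or.inr (Or.inr ⟨i, j, rfl, rfl⟩))⟩

/-- the distinguished `k`-clique after gluing -/
def newClique (C : Finset V) (m : ℕ) : Finset (V ⊕ Fin m) :=
  (C.map ⟨Sum.inl, Sum.inl_injective⟩).disjUnion
    (Finset.univ.map ⟨Sum.inr, Sum.inr_injective⟩)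
    (by simp [Finset.disjoint_left])

lemma mem_newClique {x : V ⊕ Fin m} :
    x ∈ newClique C m ↔ (∃ u ∈ C, x = Sum.inl u) ∨ ∃ j, x = Sum.inr j := by
  simp [newClique, eq_comm]

lemma newClique_card : (newClique C m).card = C.card + m := by
  simp [newClique]

lemma newClique_isClique (hC : G.IsClique ↑C) :
    (glueGraph G C m).IsClique ↑(newClique C m) := by
  intro x hx y hy hne
  simp only [Finset.coe_sort_coe, Finset.mem_coe, mem_newClique] at hx hy
  rcases hx with ⟨u, hu, rfl⟩ | ⟨i, rfl⟩ <;> rcases hy with ⟨v, hv, rfl⟩ | ⟨j, rfl⟩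
  · exact glue_adj_inl_inl.mpr (hC hu hv (by simpa using hne))
  · exact glue_adj_inl_inr.mpr hu
  · exact (glue_adj_inl_inr.mpr hv).symm
  · exact glue_adj_inr_inr.mpr (by simpa using hne)

lemma clique_map {W W' : Type} {T : SimpleGraph W} {T' : SimpleGraph W'} {f : W ↪ W'}
    (hhom : ∀ a b, T.Adj a b → T'.Adj (f a) (f b)) {K : Finset W} (hK : T.IsClique ↑K) :
    T'.IsClique ↑(K.map f) := by
  intro x hx y hy hne
  simp only [Finset.coe_map, Set.mem_image, Finset.mem_coe] at hx hy
  obtain ⟨a, ha, rfl⟩ := hx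
  obtain ⟨b, hb, rfl⟩ := hy
  exact hhom a b (hK ha hb (fun h => hne (by rw [h])))

end Glue

section Fresh
variable {l k : ℕ}

lemma fresh_one (hlk : l < k) {W : Type} [DecidableEq W] {T : SimpleGraph W}
    (hT : IsLKTree l k T) (U K I : Finset W) (hK : T.IsClique ↑K) (hKc : K.card = k)
    (hIK : I ⊆ K) (hA : l ≤ I.card + ((K \ U) \ I).card) (hIl : I.card ≤ l) :
    ∃ (W' : Type) (T' : SimpleGraph W') (f : W → W'),
      IsLKTree l k T' ∧ Function.Injective f ∧ (∀ a b, T.Adj a b → T'.Adj (f a) (f b)) ∧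
      ∃ K' : Finset W', T'.IsClique ↑K' ∧ K'.card = k ∧
        (∀ x ∈ I, f x ∈ K') ∧ (∀ y ∈ K', ∀ u ∈ U, y = f u → u ∈ I) := by
  obtain ⟨F, hFsub, hFcard⟩ :=
    Finset.exists_subset_card_eq (show l - I.card ≤ ((K \ U) \ I).card by omega)
  have hdisj : Disjoint I F := by
    refine Finset.disjoint_left.mpr fun x hx hx' => ?_
    have := hFsub hx'
    simp only [Finset.mem_sdiff] at this
    exact this.2 hx
  have hCcard : (I ∪ F).card = l := by
    rw [Finset.card_union_of_disjoint hdisj, hFcard]; omega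
  have hCK : I ∪ F ⊆ K :=
    Finset.union_subset hIK (hFsub.trans ((Finset.sdiff_subset).trans Finset.sdiff_subset))
  have hCclique : T.IsClique ↑(I ∪ F) := hK.subset (Finset.coe_subset.mpr hCK)
  refine ⟨W ⊕ Fin (k - l), glueGraph T (I ∪ F) (k - l), Sum.inl,
    IsLKTree.glue T (I ∪ F) hCcard hCclique hT, Sum.inl_injective,
    fun a b h => glue_adj_inl_inl.mpr h,
    newClique (I ∪ F) (k - l), newClique_isClique hCclique,
    by rw [newClique_card, hCcard]; omega,
    fun x hx => mem_newClique.mpr (Or.inl ⟨x, Finset.mem_union_left _ hx, rfl⟩), ?_⟩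
  rintro y hy u hu rfl
  rcases mem_newClique.mp hy with ⟨v, hv, hvy⟩ | ⟨j, hj⟩
  · obtain rfl : u = v := Sum.inl_injective hvy
    rcases Finset.mem_union.mp hv with h | h
    · exact h
    · have := hFsub h
      simp only [Finset.mem_sdiff] at this
      exact absurd hu this.1.2
  · exact absurd hj (by simp)

lemma fresh_extend (hlk : l < k) :
    ∀ (n : ℕ) {W : Type} [DecidableEq W] {T : SimpleGraph W} (hT : IsLKTree l k T)
      (U K I : Finset W) (hK : T.IsClique ↑K) (hKc : K.card = k) (hIK : I ⊆ K)
      (hIl : I.card ≤ l) (hn : l ≤ I.card + ((K \ U) \ I).card + n),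
      ∃ (W' : Type) (T' : SimpleGraph W') (f : W → W'),
        IsLKTree l k T' ∧ Function.Injective f ∧ (∀ a b, T.Adj a b → T'.Adj (f a) (f b)) ∧
        ∃ K' : Finset W', T'.IsClique ↑K' ∧ K'.card = k ∧
          (∀ x ∈ I, f x ∈ K') ∧ (∀ y ∈ K', ∀ u ∈ U, y = f u → u ∈ I) := by
  intro n
  induction n with
  | zero =>
    intro W _ T hT U K I hK hKc hIK hIl hn
    exact fresh_one hlk hT U K I hK hKc hIK (by omega) hIl
  | succ n ih =>
    intro W _ T hT U K I hK hKc hIK hIl hn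
    by_cases hA : l ≤ I.card + ((K \ U) \ I).card
    · exact fresh_one hlk hT U K I hK hKc hIK hA hIl
    · push_neg at hA
      set F := (K \ U) \ I with hF
      have hdisj : Disjoint I F := by
        refine Finset.disjoint_left.mpr fun x hx hx' => ?_
        rw [hF] at hx'
        simp only [Finset.mem_sdiff] at hx'
        exact hx'.2 hx
      have hIFK : I ∪ F ⊆ K :=
        Finset.union_subset hIK ((Finset.sdiff_subset).trans Finset.sdiff_subset)
      have hIFcard : (I ∪ F).card = I.card + F.card := Finset.card_union_of_disjoint hdisj
      obtain ⟨C, hC1, hC2, hC3⟩ := Finset.exists_subsuperset_card_eq (n := l) hIFK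
        (by omega) (by omega)
      have hCclique : T.IsClique ↑C := hK.subset (Finset.coe_subset.mpr hC2)
      have hT₁ : IsLKTree l k (glueGraph T C (k - l)) := IsLKTree.glue T C hC3 hCclique hT
      have hK₁clique := newClique_isClique (m := k - l) hCclique
      set inle : W ↪ W ⊕ Fin (k - l) := ⟨Sum.inl, Sum.inl_injective⟩ with hinle
      have hfreshsub : (F.map inle).disjUnion
          (Finset.univ.map ⟨Sum.inr, Sum.inr_injective⟩) (by simp [Finset.disjoint_left, hinle])
          ⊆ (newClique C (k - l) \ U.map inle) \ I.map inle := by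
        intro x hx
        simp only [Finset.mem_disjUnion, Finset.mem_map, hinle,
          Function.Embedding.coeFn_mk] at hx
        simp only [Finset.mem_sdiff, mem_newClique]
        rcases hx with ⟨a, ha, rfl⟩ | ⟨j, _, rfl⟩
        · rw [hF] at ha
          simp only [Finset.mem_sdiff] at ha
          refine ⟨⟨Or.inl ⟨a, hC1 (Finset.mem_union_right _ (by rw [hF]; simpa using ha)), rfl⟩, ?_⟩, ?_⟩
          · simp only [Finset.mem_map, hinle, Function.Embedding.coeFn_mk, not_exists, not_and]
            rintro u hu h
            exact ha.1.2 (Sum.inl_injective h ▸ hu)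
          · simp only [Finset.mem_map, hinle, Function.Embedding.coeFn_mk, not_exists, not_and]
            rintro u hu h
            exact ha.2 (Sum.inl_injective h ▸ hu)
        · exact ⟨⟨Or.inr ⟨j, rfl⟩, by simp [hinle]⟩, by simp [hinle]⟩
      have hfreshcard : F.card + (k - l) ≤
          ((newClique C (k - l) \ U.map inle) \ I.map inle).card := by
        calc F.card + (k - l) = ((F.map inle).disjUnion
              (Finset.univ.map ⟨Sum.inr, Sum.inr_injective⟩)
              (by simp [Finset.disjoint_left, hinle])).card := by
              rw [Finset.card_disjUnion, Finset.card_map, Finset.card_map,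
                Finset.card_univ, Fintype.card_fin]
          _ ≤ _ := Finset.card_le_card hfreshsub
      obtain ⟨W', T', f₂, hT', hinj, hhom, K', hK', hK'c, hIK', hsep⟩ :=
        ih hT₁ (U.map inle) (newClique C (k - l)) (I.map inle) hK₁clique
          (by rw [newClique_card, hC3]; omega)
          (fun x hx => by
            simp only [Finset.mem_map, hinle, Function.Embedding.coeFn_mk] at hx
            obtain ⟨a, ha, rfl⟩ := hx
            exact mem_newClique.mpr (Or.inl ⟨a, hC1 (Finset.mem_union_left _ ha), rfl⟩))
          (by rw [Finset.card_map]; omega)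
          (by rw [Finset.card_map]; omega)
      refine ⟨W', T', f₂ ∘ Sum.inl, hT', hinj.comp Sum.inl_injective,
        fun a b h => hhom _ _ (glue_adj_inl_inl.mpr h), K', hK', hK'c, ?_, ?_⟩
      · intro x hx
        exact hIK' _ (Finset.mem_map_of_mem inle hx)
      · rintro y hy u hu rfl
        have := hsep _ hy (inle u) (Finset.mem_map_of_mem inle hu) rfl
        simp only [Finset.mem_map, hinle, Function.Embedding.coeFn_mk] at this
        obtain ⟨a, ha, h⟩ := this
        exact Sum.inl_injective h ▸ ha

section Build
variable {l k : ℕ} {V : Type} [DecidableEq V] {G : SimpleGraph V} {ι : Type} [DecidableEq ι]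

lemma build (hlk : l < k) (td : TreeDecomp G ι) (hw : td.widthLE l k) (root : ι)
    (par : ι → ι)
    (hpar1 : ∀ i, i ≠ root → s(par i, i) ∈ (tpath td.isTree root i).edges)
    (hpar2 : ∀ i, i ≠ root → td.T.dist root (par i) < td.T.dist root i) :
    ∀ (n : ℕ) (S : Finset ι), S.card = n → root ∈ S → (∀ i ∈ S, i ≠ root → par i ∈ S) →
    ∃ (W : Type) (T : SimpleGraph W) (g : V → W) (K : ι → Finset W),
      IsLKTree l k T ∧
      (∀ u v, (∃ i ∈ S, u ∈ td.bag i) → (∃ i ∈ S, v ∈ td.bag i) → g u = g v → u = v) ∧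
      (∀ i ∈ S, T.IsClique ↑(K i) ∧ (K i).card = k ∧ ∀ v ∈ td.bag i, g v ∈ K i) := by
  intro n
  induction n using Nat.strong_induction_on with
  | _ n ih =>
  intro S hcard hroot hclosed
  set ht := td.isTree with hht
  rcases Nat.lt_or_ge n 2 with hn2 | hn2
  · -- base case : S = {root}
    have hS : S = {root} := by
      have h1 : S.card = 1 := by
        have : 1 ≤ S.card := Finset.card_pos.mpr ⟨root, hroot⟩
        omega
      obtain ⟨a, ha⟩ := Finset.card_eq_one.mp h1
      rw [ha]
      rw [ha] at hroot
      simp only [Finset.mem_singleton] at hroot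
      rw [hroot]
    have hk1 : 1 ≤ k := by omega
    have hBle : Fintype.card ↥(td.bag root) ≤ Fintype.card (Fin k) := by
      rw [Fintype.card_coe, Fintype.card_fin]
      exact hw.1 root
    obtain ⟨e⟩ := Function.Embedding.nonempty_of_card_le hBle
    refine ⟨Fin k, ⊤, fun v => if h : v ∈ td.bag root then e ⟨v, h⟩ else ⟨0, hk1⟩,
      fun _ => Finset.univ, IsLKTree.base (by simp), ?_, ?_⟩
    · rintro u v ⟨i, hi, hu⟩ ⟨j, hj, hv⟩ huv
      rw [hS, Finset.mem_singleton] at hi hj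
      subst hi; subst hj
      simp only at huv
      rw [dif_pos hu, dif_pos hv] at huv
      exact Subtype.mk_eq_mk.mp (e.injective huv)
    · intro i hi
      rw [hS, Finset.mem_singleton] at hi
      subst hi
      refine ⟨?_, by simp, fun v hv => Finset.mem_univ _⟩
      intro x hx y hy hne
      simpa using hne
  · -- inductive step
    have hSne : S.Nonempty := ⟨root, hroot⟩
    obtain ⟨b, hbS, hbmax⟩ := S.exists_max_image (fun i => td.T.dist root i) hSne
    have hbne : b ≠ root := by
      rintro rfl
      have : ∀ j ∈ S, j = b := by
        intro j hj
        have h1 := hbmax j hj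
        simp only [SimpleGraph.dist_self] at h1
        have h2 : td.T.dist b j = 0 := by omega
        exact ((ht.isConnected b j).dist_eq_zero_iff.mp h2).symm
      have : S ⊆ {b} := fun j hj => Finset.mem_singleton.mpr (this j hj)
      have := Finset.card_le_card this
      simp only [Finset.card_singleton] at this
      omega
    set S' := S.erase b with hS'
    have hrootS' : root ∈ S' := Finset.mem_erase.mpr ⟨(Ne.symm hbne), hroot⟩
    have hdistpos : td.T.dist root b ≠ 0 := by
      intro h
      exact hbne ((ht.isConnected root b).dist_eq_zero_iff.mp h).symm
    have hclosed' : ∀ i ∈ S', i ≠ root → par i ∈ S' := by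
      intro i hi hine
      have hiS : i ∈ S := Finset.mem_of_mem_erase hi
      refine Finset.mem_erase.mpr ⟨?_, hclosed i hiS hine⟩
      intro hpb
      have h1 := hpar2 i hine
      have h2 := hbmax i hiS
      rw [hpb] at h1
      omega
    have hcard' : S'.card < n := by
      rw [hS', Finset.card_erase_of_mem hbS, hcard]
      omega
    obtain ⟨W, T0, g, K, hT0, hginj, hKprop⟩ := ih S'.card hcard' S' rfl hrootS' hclosed'
    letI : DecidableEq W := Classical.decEq W
    set qb := par b with hqb
    have hqbS' : qb ∈ S' := by
      refine Finset.mem_erase.mpr ⟨?_, hclosed b hbS hbne⟩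
      intro h
      have := hpar2 b hbne
      rw [hqb] at h
      rw [h] at this
      omega
    have hqbne : b ≠ qb := by
      intro h
      have := hpar2 b hbne
      rw [← hqb] at this
      rw [← h] at this
      omega
    -- KEY separation property
    have hkey : ∀ v ∈ td.bag b, (∃ j ∈ S', v ∈ td.bag j) → v ∈ td.bag qb := by
      rintro v hvb ⟨j, hjS', hvj⟩
      have hjb : j ≠ b := Finset.ne_of_mem_erase hjS'
      have hjle : td.T.dist root j ≤ td.T.dist root b := hbmax j (Finset.mem_of_mem_erase hjS')
      have hsep := tpath_sep ht hjle hjb (hpar1 b hbne)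
      have hsupp := tpath_support_subset ht (td.connected v)
        (show j ∈ {i | v ∈ td.bag i} from hvj) (show b ∈ {i | v ∈ td.bag i} from hvb)
      exact hsupp qb hsep
    set Pold := td.bag b ∩ td.bag qb with hPold
    set D := td.bag b \ td.bag qb with hD
    have hDnotold : ∀ v ∈ D, ¬ (∃ j ∈ S', v ∈ td.bag j) := by
      intro v hv hex
      rw [hD, Finset.mem_sdiff] at hv
      exact hv.2 (hkey v hv.1 hex)
    set I := Pold.image g with hI
    have hPoldreg : ∀ v ∈ Pold, ∃ j ∈ S', v ∈ td.bag j := by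
      intro v hv
      rw [hPold, Finset.mem_inter] at hv
      exact ⟨qb, hqbS', hv.2⟩
    have hIcard : I.card = Pold.card := by
      rw [hI]
      apply Finset.card_image_of_injOn
      intro u hu v hv huv
      exact hginj u v (hPoldreg u hu) (hPoldreg v hv) huv
    have hIl : I.card ≤ l := by
      rw [hIcard, hPold]
      exact hw.2 b qb hqbne
    obtain ⟨hKcl, hKc, hKmem⟩ := hKprop qb hqbS'
    have hIK : I ⊆ K qb := by
      intro x hx
      rw [hI, Finset.mem_image] at hx
      obtain ⟨v, hv, rfl⟩ := hx
      rw [hPold, Finset.mem_inter] at hv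
      exact hKmem v hv.2
    set U := (S'.biUnion td.bag).image g with hU
    obtain ⟨W', T', f, hT', hfinj, hfhom, K', hK'cl, hK'c, hIinK', hsep⟩ :=
      fresh_extend hlk l hT0 U (K qb) I hKcl hKc hIK hIl (by omega)
    letI : DecidableEq W' := Classical.decEq W'
    set Kfree := K' \ I.image f with hKfree
    have hIfK' : I.image f ⊆ K' := by
      intro x hx
      rw [Finset.mem_image] at hx
      obtain ⟨y, hy, rfl⟩ := hx
      exact hIinK' y hy
    have hKfreecard : Kfree.card = k - I.card := by
      rw [hKfree, Finset.card_sdiff_of_subset hIfK', hK'c, Finset.card_image_of_injective _ hfinj]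
    have hDcard : D.card ≤ k - I.card := by
      rw [hIcard]
      have h1 : D.card + Pold.card = (td.bag b).card := by
        rw [hD, hPold]
        rw [Finset.card_sdiff_add_card_inter]
      have h2 := hw.1 b
      omega
    have hDKfree : Fintype.card ↥D ≤ Fintype.card ↥Kfree := by
      rw [Fintype.card_coe, Fintype.card_coe, hKfreecard]
      exact hDcard
    obtain ⟨e2⟩ := Function.Embedding.nonempty_of_card_le hDKfree
    set g' : V → W' := fun v => if h : v ∈ D then (e2 ⟨v, h⟩ : W') else f (g v) with hg'
    have hregS : ∀ v, (∃ i ∈ S, v ∈ td.bag i) → v ∉ D → (∃ j ∈ S', v ∈ td.bag j) := by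
      rintro v ⟨i, hiS, hvi⟩ hvD
      by_cases hib : i = b
      · subst hib
        have hvq : v ∈ td.bag qb := by
          by_contra hq
          exact hvD (by rw [hD, Finset.mem_sdiff]; exact ⟨hvi, hq⟩)
        exact ⟨qb, hqbS', hvq⟩
      · exact ⟨i, Finset.mem_erase.mpr ⟨hib, hiS⟩, hvi⟩
    have hmemU : ∀ v, (∃ j ∈ S', v ∈ td.bag j) → g v ∈ U := by
      rintro v ⟨j, hj, hvj⟩
      rw [hU, Finset.mem_image]
      exact ⟨v, Finset.mem_biUnion.mpr ⟨j, hj, hvj⟩, rfl⟩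
    have hmixed : ∀ u v, u ∈ D → (∃ j ∈ S', v ∈ td.bag j) → g' u ≠ g' v := by
      intro u v hu hv heq
      have hvD : v ∉ D := by
        intro hvD
        exact hDnotold v hvD hv
      simp only [hg'] at heq
      simp only [dif_pos hu, dif_neg hvD] at heq
      have hin : ((e2 ⟨u, hu⟩ : ↥Kfree) : W') ∈ K' \ I.image f := Subtype.coe_prop _
      rw [heq, Finset.mem_sdiff] at hin
      have := hsep _ hin.1 (g v) (hmemU v hv) rfl
      exact hin.2 (Finset.mem_image_of_mem f this)
    set Kn : ι → Finset W' := fun i => if i = b then K' else (K i).map ⟨f, hfinj⟩ with hKn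
    refine ⟨W', T', g', Kn, hT', ?_, ?_⟩
    · -- injectivity
      intro u v hu hv huv
      by_cases huD : u ∈ D <;> by_cases hvD : v ∈ D
      · simp only [hg'] at huv
        simp only [dif_pos huD, dif_pos hvD] at huv
        exact Subtype.mk_eq_mk.mp (e2.injective (Subtype.coe_injective huv))
      · exact absurd huv (hmixed u v huD (hregS v hv hvD))
      · exact absurd huv.symm (hmixed v u hvD (hregS u hu huD))
      · simp only [hg'] at huv
        simp only [dif_neg huD, dif_neg hvD] at huv
        exact hginj u v (hregS u hu huD) (hregS v hv hvD) (hfinj huv)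
    · -- cliques
      intro i hiS
      by_cases hib : i = b
      · subst hib
        simp only [hKn, if_pos rfl]
        refine ⟨hK'cl, hK'c, ?_⟩
        intro v hv
        simp only [hg']
        by_cases hvD : v ∈ D
        · rw [dif_pos hvD]
          have hin : ((e2 ⟨v, hvD⟩ : ↥Kfree) : W') ∈ K' \ I.image f := Subtype.coe_prop _
          exact (Finset.mem_sdiff.mp hin).1
        · rw [dif_neg hvD]
          have hvq : v ∈ td.bag qb := by
            by_contra hq
            exact hvD (by rw [hD, Finset.mem_sdiff]; exact ⟨hv, hq⟩)
          have hvP : v ∈ Pold := by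
            rw [hPold, Finset.mem_inter]; exact ⟨hv, hvq⟩
          exact hIinK' (g v) (by rw [hI]; exact Finset.mem_image_of_mem g hvP)
      · have hiS' : i ∈ S' := Finset.mem_erase.mpr ⟨hib, hiS⟩
        obtain ⟨h1, h2, h3⟩ := hKprop i hiS'
        simp only [hKn, if_neg hib]
        refine ⟨clique_map hfhom h1, by rw [Finset.card_map, h2], ?_⟩
        intro v hv
        have hvD : v ∉ D := by
          intro hvD
          exact hDnotold v hvD ⟨i, hiS', hv⟩
        simp only [hg', dif_neg hvD]
        exact Finset.mem_map_of_mem _ (h3 v hv)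

end Build

lemma reverse_dir {l k : ℕ} (hlk : l < k) {V : Type} [Fintype V] [DecidableEq V]
    {G : SimpleGraph V} {ι : Type} (td : TreeDecomp G ι) (hw : td.widthLE l k) :
    IsPartialLKTree l k G := by
  classical
  set ht := td.isTree with hht
  obtain ⟨root⟩ : Nonempty ι := ht.isConnected.nonempty
  have hpe : ∀ i, i ≠ root → ∃ q, s(q, i) ∈ (tpath ht root i).edges ∧
      td.T.dist root q < td.T.dist root i := fun i h => tpath_penultimate ht h
  choose par hpar1 hpar2 using hpe
  set par' : ι → ι := fun i => if h : i ≠ root then par i h else root with hpar'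
  have hp1 : ∀ i, i ≠ root → s(par' i, i) ∈ (tpath ht root i).edges := by
    intro i h
    simp only [hpar', dif_pos h]
    exact hpar1 i h
  have hp2 : ∀ i, i ≠ root → td.T.dist root (par' i) < td.T.dist root i := by
    intro i h
    simp only [hpar', dif_pos h]
    exact hpar2 i h
  set wv : V → ι := fun v => (td.mem_bag v).choose with hwv
  have hwv1 : ∀ v, v ∈ td.bag (wv v) := fun v => (td.mem_bag v).choose_spec
  set ew : V → V → ι := fun u v =>
    if h : G.Adj u v then (td.edge_cover u v h).choose else root with hewdef
  have hew : ∀ u v, G.Adj u v → u ∈ td.bag (ew u v) ∧ v ∈ td.bag (ew u v) := by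
    intro u v h
    simp only [hewdef, dif_pos h]
    exact (td.edge_cover u v h).choose_spec
  set Wit : Finset ι :=
    Finset.univ.image wv ∪ Finset.univ.image (fun p : V × V => ew p.1 p.2) with hWit
  set S : Finset ι :=
    insert root (Wit.biUnion (fun w => (tpath ht root w).support.toFinset)) with hSdef
  have hrootS : root ∈ S := Finset.mem_insert_self _ _
  have hWitS : ∀ w ∈ Wit, w ∈ S := fun w hw => Finset.mem_insert_of_mem
    (Finset.mem_biUnion.mpr ⟨w, hw, List.mem_toFinset.mpr (SimpleGraph.Walk.end_mem_support _)⟩)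
  have hclosedS : ∀ i ∈ S, i ≠ root → par' i ∈ S := by
    intro i hi hiroot
    rcases Finset.mem_insert.mp hi with h | h
    · exact absurd h hiroot
    · obtain ⟨w, hwWit, hisup⟩ := Finset.mem_biUnion.mp h
      rw [List.mem_toFinset] at hisup
      have htake : (tpath ht root w).takeUntil i hisup = tpath ht root i :=
        tpath_unique ht _ ((tpath_isPath ht root w).takeUntil hisup)
      have hqsup : par' i ∈ (tpath ht root i).support :=
        SimpleGraph.Walk.fst_mem_support_of_mem_edges _ (hp1 i hiroot)
      rw [← htake] at hqsup
      have hsub := SimpleGraph.Walk.support_takeUntil_subset _ hisup hqsup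
      exact Finset.mem_insert_of_mem
        (Finset.mem_biUnion.mpr ⟨w, hwWit, List.mem_toFinset.mpr hsub⟩)
  obtain ⟨W, T, g, K, hT, hinj, hKs⟩ :=
    build hlk td hw root par' hp1 hp2 S.card S rfl hrootS hclosedS
  have hregv : ∀ v : V, ∃ i ∈ S, v ∈ td.bag i := by
    intro v
    refine ⟨wv v, hWitS _ ?_, hwv1 v⟩
    rw [hWit]
    exact Finset.mem_union_left _ (Finset.mem_image.mpr ⟨v, Finset.mem_univ _, rfl⟩)
  have hginj : Function.Injective g := by
    intro u v huv
    exact hinj u v (hregv u) (hregv v) huv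
  refine ⟨W, T, g, hT, hginj, ?_⟩
  intro u v huv
  have h1 := hew u v huv
  have hewS : ew u v ∈ S := by
    refine hWitS _ ?_
    rw [hWit]
    exact Finset.mem_union_right _ (Finset.mem_image.mpr ⟨(u, v), Finset.mem_univ _, rfl⟩)
  obtain ⟨hcl, hcc, hmem⟩ := hKs (ew u v) hewS
  have hne : g u ≠ g v := fun h => huv.ne (hginj h)
  exact hcl (Finset.mem_coe.mpr (hmem u h1.1)) (Finset.mem_coe.mpr (hmem v h1.2)) hne

section AddLeaf
open SimpleGraph
variable {ι : Type} {T : SimpleGraph ι} {i₀ : ι}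

def addLeaf (T : SimpleGraph ι) (i₀ : ι) : SimpleGraph (Option ι) :=
  SimpleGraph.fromRel (fun a b =>
    (∃ x y, a = some x ∧ b = some y ∧ T.Adj x y) ∨ (a = some i₀ ∧ b = none))

lemma addLeaf_adj_some_some {x y : ι} :
    (addLeaf T i₀).Adj (some x) (some y) ↔ T.Adj x y := by
  simp only [addLeaf, SimpleGraph.fromRel_adj]
  constructor
  · rintro ⟨hne, h | h⟩
    · rcases h with ⟨a, b, ha, hb, hab⟩ | ⟨ha, hb⟩ <;> simp_all
    · rcases h with ⟨a, b, ha, hb, hab⟩ | ⟨ha, hb⟩ <;> simp_all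
      exact hab.symm
  · intro h
    exact ⟨by simpa using h.ne, Or.inl (Or.inl ⟨x, y, rfl, rfl, h⟩)⟩

lemma addLeaf_none_adj {a : Option ι} (h : (addLeaf T i₀).Adj none a) : a = some i₀ := by
  simp only [addLeaf, SimpleGraph.fromRel_adj] at h
  obtain ⟨hne, h | h⟩ := h
  · rcases h with ⟨x, y, hx, hy, hxy⟩ | ⟨hx, hy⟩ <;> simp_all
  · rcases h with ⟨x, y, hx, hy, hxy⟩ | ⟨hx, hy⟩ <;> simp_all

lemma addLeaf_adj_none_i₀ : (addLeaf T i₀).Adj (some i₀) none := by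
  simp [addLeaf, SimpleGraph.fromRel_adj]

def addLeafHom (T : SimpleGraph ι) (i₀ : ι) : T →g addLeaf T i₀ :=
  ⟨some, fun h => addLeaf_adj_some_some.mpr h⟩

lemma addLeaf_lift :
    ∀ {a b : Option ι} (p : (addLeaf T i₀).Walk a b) (_ : ∀ z ∈ p.support, z ≠ none)
      {x y : ι} (ha : a = some x) (hb : b = some y),
      ∃ q : T.Walk x y, q.map (addLeafHom T i₀) = p.copy ha hb := by
  intro a b p
  induction p with
  | nil =>
    intro hs x y ha hb
    subst ha
    obtain rfl : x = y := by injection hb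
    refine ⟨SimpleGraph.Walk.nil, ?_⟩
    simp
    rfl
  | @cons u v w h p ih =>
    intro hs x y ha hb
    subst ha
    have hv : v ≠ none := hs v (by
      rw [SimpleGraph.Walk.support_cons]
      exact List.mem_cons_of_mem _ (SimpleGraph.Walk.start_mem_support p))
    obtain ⟨m, rfl⟩ := Option.ne_none_iff_exists'.mp hv
    have hadj : T.Adj x m := addLeaf_adj_some_some.mp h
    obtain ⟨q, hq⟩ := ih (fun z hz => hs z (by
      rw [SimpleGraph.Walk.support_cons]; exact List.mem_cons_of_mem _ hz)) rfl hb
    refine ⟨SimpleGraph.Walk.cons hadj q, ?_⟩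
    rw [SimpleGraph.Walk.map_cons, hq]
    simp [addLeafHom]
    subst hb
    rfl

lemma addLeaf_isTree (ht : T.IsTree) (i₀ : ι) : (addLeaf T i₀).IsTree := by
  classical
  have hreach : ∀ x y : ι, (addLeaf T i₀).Reachable (some x) (some y) := by
    intro x y
    exact SimpleGraph.Reachable.map (addLeafHom T i₀) (ht.isConnected x y)
  constructor
  · refine SimpleGraph.Connected.mk ?_
    intro a b
    match a, b with
    | none, none => exact SimpleGraph.Reachable.refl _
    | none, some y => exact (addLeaf_adj_none_i₀.symm.reachable).trans (hreach i₀ y)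
    | some x, none => exact (hreach x i₀).trans addLeaf_adj_none_i₀.reachable
    | some x, some y => exact hreach x y
  · intro a c hc
    by_cases hn : none ∈ c.support
    · set c' := c.rotate none hn with hc'def
      have hcyc : c'.IsCycle := hc.rotate hn
      obtain ⟨b, h1, p, hp⟩ := SimpleGraph.Walk.not_nil_iff.mp hcyc.not_nil
      rw [hp] at hcyc
      have h2 := (SimpleGraph.Walk.cons_isCycle_iff _ _).mp hcyc
      have hb : b = some i₀ := addLeaf_none_adj h1
      have hbne : (none : Option ι) ≠ b := by rw [hb]; simp
      obtain ⟨d, h3, p', hp'⟩ := SimpleGraph.Walk.exists_eq_cons_of_ne hbne p.reverse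
      have hd : d = some i₀ := addLeaf_none_adj h3
      have hmem : s(none, d) ∈ p.reverse.edges := by
        rw [hp']
        simp
      rw [SimpleGraph.Walk.edges_reverse, List.mem_reverse] at hmem
      apply h2.2
      have : s(none, b) = s(none, d) := by rw [hb, hd]
      rw [this]
      exact hmem
    · have ha : a ≠ none := fun h => hn (h ▸ c.start_mem_support)
      obtain ⟨x, rfl⟩ := Option.ne_none_iff_exists'.mp ha
      obtain ⟨q, hq⟩ := addLeaf_lift c (fun z hz h => hn (h ▸ hz)) rfl rfl
      have hqc : (q.map (addLeafHom T i₀)).IsCycle := by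
        rw [hq]
        exact hc
      have hqq : q.IsCycle :=
        (SimpleGraph.Walk.map_isCycle_iff_of_injective (Option.some_injective ι)).mp hqc
      exact ht.IsAcyclic q hqq

end AddLeaf

section Forward
open SimpleGraph

lemma walk_induce_lift {ι ι' : Type} {T : SimpleGraph ι} {T' : SimpleGraph ι'}
    (F : ι → ι') (hF : ∀ a b, T.Adj a b → T'.Adj (F a) (F b)) {s : Set ι'} :
    ∀ {a b : ι} (w : T.Walk a b), (∀ z ∈ w.support, F z ∈ s) →
      ∀ (ha : F a ∈ s) (hb : F b ∈ s),
      (T'.induce s).Reachable ⟨F a, ha⟩ ⟨F b, hb⟩ := by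
  intro a b w
  induction w with
  | nil => intro _ _ _; exact Reachable.refl _
  | @cons u v w h p ih =>
    intro hs ha hb
    have hv : F v ∈ s := hs v (by
      rw [Walk.support_cons]; exact List.mem_cons_of_mem _ p.start_mem_support)
    refine Reachable.trans (SimpleGraph.Adj.reachable ?_) (ih (fun z hz => hs z (by
      rw [Walk.support_cons]; exact List.mem_cons_of_mem _ hz)) hv hb)
    simp only [SimpleGraph.comap_adj, Function.Embedding.coe_subtype]
    exact hF u v h

/-- tree decompositions of width `(l,k)` whose bags cover all small cliques -/
def GoodTD (l k : ℕ) {V : Type} (G : SimpleGraph V) : Prop :=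
  ∃ (ι : Type) (td : TreeDecomp G ι),
    (@TreeDecomp.widthLE V (Classical.decEq V) G ι td l k) ∧
    ∀ C : Finset V, C.card ≤ l → G.IsClique ↑C → ∃ i, C ⊆ td.bag i

lemma good_of_isLKTree {l k : ℕ} (hlk : l < k) {V : Type} {G : SimpleGraph V}
    (h : IsLKTree l k G) : GoodTD l k G := by
  induction h with
  | @base V iV hcard =>
    have hpre : (⊥ : SimpleGraph Unit).Preconnected := by
      intro a b
      rw [Subsingleton.elim a b]
    refine ⟨Unit, ⟨⊥, ⟨SimpleGraph.Connected.mk hpre,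
        SimpleGraph.isAcyclic_bot⟩, fun _ => Finset.univ,
        fun v => ⟨(), Finset.mem_univ v⟩,
        fun u v _ => ⟨(), Finset.mem_univ u, Finset.mem_univ v⟩, fun v => ?_⟩, ?_, ?_⟩
    · intro a b
      rw [Subsingleton.elim a b]
    · constructor
      · intro i
        simp [hcard]
      · intro i j hne
        exact absurd (Subsingleton.elim i j) hne
    · intro C _ _
      exact ⟨(), Finset.subset_univ C⟩
  | @glue V G C hC hclique hG ih =>
    classical
    obtain ⟨ι, td, hw, hcov⟩ := ih
    obtain ⟨i₀, hi₀⟩ := hcov C (le_of_eq hC) hclique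
    set m := k - l with hm
    set inle : V ↪ V ⊕ Fin m := ⟨Sum.inl, Sum.inl_injective⟩ with hinle
    set bag' : Option ι → Finset (V ⊕ Fin m) := fun o =>
      Option.rec (newClique C m) (fun i => (td.bag i).map inle) o with hbag'
    have hbs : ∀ i, bag' (some i) = (td.bag i).map inle := fun i => rfl
    have hbn : bag' none = newClique C m := rfl
    have hIeq : ∀ (s t : Finset (V ⊕ Fin m)),
        (@Inter.inter _ (@Finset.instInter _ (Classical.decEq _)) s t) = s ∩ t := by
      intro s t
      rw [Subsingleton.elim (Classical.decEq (V ⊕ Fin m)) inferInstance]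
    refine ⟨Option ι, ⟨addLeaf td.T i₀, addLeaf_isTree td.isTree i₀, bag', ?_, ?_, ?_⟩, ?_, ?_⟩
    · -- mem_bag
      rintro (u | j)
      · obtain ⟨i, hi⟩ := td.mem_bag u
        exact ⟨some i, by rw [hbs]; exact Finset.mem_map_of_mem _ hi⟩
      · exact ⟨none, by rw [hbn]; exact mem_newClique.mpr (Or.inr ⟨j, rfl⟩)⟩
    · -- edge_cover
      rintro (u | i') (v | j') hadj
      · obtain ⟨i, hi1, hi2⟩ := td.edge_cover u v (glue_adj_inl_inl.mp hadj)
        exact ⟨some i, Finset.mem_map_of_mem _ hi1, Finset.mem_map_of_mem _ hi2⟩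
      · refine ⟨none, ?_, ?_⟩
        · exact mem_newClique.mpr (Or.inl ⟨u, glue_adj_inl_inr.mp hadj, rfl⟩)
        · exact mem_newClique.mpr (Or.inr ⟨j', rfl⟩)
      · refine ⟨none, ?_, ?_⟩
        · exact mem_newClique.mpr (Or.inr ⟨i', rfl⟩)
        · exact mem_newClique.mpr (Or.inl ⟨v, glue_adj_inl_inr.mp hadj.symm, rfl⟩)
      · exact ⟨none, mem_newClique.mpr (Or.inr ⟨i', rfl⟩),
          mem_newClique.mpr (Or.inr ⟨j', rfl⟩)⟩
    · -- connected
      rintro (u | j)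
      · -- inl u
        have hsome : ∀ i : ι, Sum.inl u ∈ bag' (some i) ↔ u ∈ td.bag i := by
          intro i
          rw [hbs]
          simp [hinle]
        have hreach : ∀ (i j : ι) (hi : u ∈ td.bag i) (hj : u ∈ td.bag j)
            (hi' : some i ∈ {o | Sum.inl u ∈ bag' o}) (hj' : some j ∈ {o | Sum.inl u ∈ bag' o}),
            ((addLeaf td.T i₀).induce {o | Sum.inl u ∈ bag' o}).Reachable ⟨some i, hi'⟩ ⟨some j, hj'⟩ := by
          intro i j hi hj hi' hj'
          obtain ⟨pw⟩ := td.connected u ⟨i, hi⟩ ⟨j, hj⟩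
          obtain ⟨q, hq⟩ := walk_induce_down pw
          exact walk_induce_lift (fun i => some i)
            (fun a b h => addLeaf_adj_some_some.mpr h) q
            (fun z hz => (hsome z).mpr (hq z hz)) hi' hj'
        rintro ⟨(a | i), hia⟩ ⟨(b | jb), hjb⟩
        · exact Reachable.refl _
        · -- none to some
          have huC : u ∈ C := by
            have := hia
            simp only [Set.mem_setOf_eq, hbn, mem_newClique] at this
            rcases this with ⟨w, hw, hww⟩ | ⟨jj, hjj⟩
            · obtain rfl : u = w := Sum.inl_injective hww
              exact hw
            · exact absurd hjj (by simp)
          have hui₀ : u ∈ td.bag i₀ := hi₀ huC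
          have hmemi₀ : some i₀ ∈ {o | Sum.inl u ∈ bag' o} := (hsome i₀).mpr hui₀
          have hub : u ∈ td.bag jb := by
            have := hjb
            rwa [Set.mem_setOf_eq, hsome] at this
          refine Reachable.trans (SimpleGraph.Adj.reachable (v := ⟨some i₀, hmemi₀⟩) ?_)
            (hreach i₀ jb hui₀ hub hmemi₀ hjb)
          simp only [SimpleGraph.comap_adj, Function.Embedding.coe_subtype]
          exact addLeaf_adj_none_i₀.symm
        · -- some to none (symmetric)
          have huC : u ∈ C := by
            have := hjb
            simp only [Set.mem_setOf_eq, hbn, mem_newClique] at this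
            rcases this with ⟨w, hw, hww⟩ | ⟨jj, hjj⟩
            · obtain rfl : u = w := Sum.inl_injective hww
              exact hw
            · exact absurd hjj (by simp)
          have hui₀ : u ∈ td.bag i₀ := hi₀ huC
          have hmemi₀ : some i₀ ∈ {o | Sum.inl u ∈ bag' o} := (hsome i₀).mpr hui₀
          have hua : u ∈ td.bag i := by
            have := hia
            rwa [Set.mem_setOf_eq, hsome] at this
          refine Reachable.trans (hreach i i₀ hua hui₀ hia hmemi₀)
            (SimpleGraph.Adj.reachable ?_)
          simp only [SimpleGraph.comap_adj, Function.Embedding.coe_subtype]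
          exact addLeaf_adj_none_i₀
        · -- some to some
          have hua : u ∈ td.bag i := by rw [← hsome]; exact hia
          have hub : u ∈ td.bag jb := by rw [← hsome]; exact hjb
          exact hreach i jb hua hub _ _
      · -- inr j : only bag is none
        have honly : ∀ o, Sum.inr j ∈ bag' o → o = none := by
          rintro (⟨⟩ | i) h
          · rfl
          · rw [hbs] at h
            simp [hinle] at h
        rintro ⟨a, ha⟩ ⟨b, hb⟩
        have ha' : a = none := honly a ha
        have hb' : b = none := honly b hb
        subst ha'; subst hb'
        exact Reachable.refl _
    · -- widthLE
      constructor
      · rintro (⟨⟩ | i)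
        · show (newClique C m).card ≤ k
          rw [newClique_card, hC]
          omega
        · show ((td.bag i).map inle).card ≤ k
          rw [Finset.card_map]
          exact hw.1 i
      · rintro (⟨⟩ | i) (⟨⟩ | j) hne
        · exact absurd rfl hne
        · -- none vs some j
          rw [hIeq]
          show (bag' none ∩ bag' (some j)).card ≤ l
          have hsub : bag' none ∩ bag' (some j) ⊆ (C ∩ td.bag j).map inle := by
            intro x hx
            rw [Finset.mem_inter, hbn, hbs] at hx
            obtain ⟨h1, h2⟩ := hx
            rw [Finset.mem_map] at h2
            obtain ⟨u, hu, rfl⟩ := h2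
            rcases mem_newClique.mp h1 with ⟨w, hw, hww⟩ | ⟨jj, hjj⟩
            · obtain rfl : u = w := by simpa [hinle] using hww
              exact Finset.mem_map_of_mem _ (Finset.mem_inter.mpr ⟨hw, hu⟩)
            · exact absurd hjj (by simp [hinle])
          calc (bag' none ∩ bag' (some j)).card ≤ ((C ∩ td.bag j).map inle).card :=
                Finset.card_le_card hsub
            _ ≤ l := by
                rw [Finset.card_map]
                exact le_trans (Finset.card_le_card (Finset.inter_subset_left)) (le_of_eq hC)
        · -- some i vs none
          rw [hIeq]
          show (bag' (some i) ∩ bag' none).card ≤ l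
          have hsub : bag' (some i) ∩ bag' none ⊆ (C ∩ td.bag i).map inle := by
            intro x hx
            rw [Finset.mem_inter, hbn, hbs] at hx
            obtain ⟨h2, h1⟩ := hx
            rw [Finset.mem_map] at h2
            obtain ⟨u, hu, rfl⟩ := h2
            rcases mem_newClique.mp h1 with ⟨w, hw, hww⟩ | ⟨jj, hjj⟩
            · obtain rfl : u = w := by simpa [hinle] using hww
              exact Finset.mem_map_of_mem _ (Finset.mem_inter.mpr ⟨hw, hu⟩)
            · exact absurd hjj (by simp [hinle])
          calc (bag' (some i) ∩ bag' none).card ≤ ((C ∩ td.bag i).map inle).card :=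
                Finset.card_le_card hsub
            _ ≤ l := by
                rw [Finset.card_map]
                exact le_trans (Finset.card_le_card (Finset.inter_subset_left)) (le_of_eq hC)
        · -- some some
          have hij : i ≠ j := fun h => hne (by rw [h])
          rw [hIeq]
          show (bag' (some i) ∩ bag' (some j)).card ≤ l
          have : bag' (some i) ∩ bag' (some j) = (td.bag i ∩ td.bag j).map inle := by
            rw [hbs, hbs]
            ext x
            simp only [Finset.mem_inter, Finset.mem_map]
            constructor
            · rintro ⟨⟨u, hu, rfl⟩, ⟨v, hv, hvv⟩⟩
              obtain rfl : u = v := inle.injective hvv.symm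
              exact ⟨u, ⟨hu, hv⟩, rfl⟩
            · rintro ⟨u, hu, rfl⟩
              exact ⟨⟨u, hu.1, rfl⟩, ⟨u, hu.2, rfl⟩⟩
          rw [this, Finset.card_map]
          exact hw.2 i j hij
    · -- clique cover
      intro C' hC'card hC'clique
      by_cases hinr : ∃ x ∈ C', ∃ j : Fin m, x = Sum.inr j
      · refine ⟨none, ?_⟩
        intro y hy
        show y ∈ newClique C m
        match y with
        | Sum.inr j => exact mem_newClique.mpr (Or.inr ⟨j, rfl⟩)
        | Sum.inl u =>
          obtain ⟨x, hx, j, rfl⟩ := hinr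
          have hne : (Sum.inl u : V ⊕ Fin m) ≠ Sum.inr j := by simp
          have hadj := hC'clique (Finset.mem_coe.mpr hy) (Finset.mem_coe.mpr hx) hne
          exact mem_newClique.mpr (Or.inl ⟨u, glue_adj_inl_inr.mp hadj, rfl⟩)
      · push_neg at hinr
        set D : Finset V := C'.preimage Sum.inl (Sum.inl_injective.injOn) with hDdef
        have hDC' : C' = D.map inle := by
          ext x
          constructor
          · intro hx
            match x with
            | Sum.inr j => exact absurd rfl (hinr _ hx j)
            | Sum.inl u =>
              refine Finset.mem_map_of_mem _ ?_
              rw [hDdef, Finset.mem_preimage]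
              exact hx
          · intro hx
            rw [Finset.mem_map] at hx
            obtain ⟨u, hu, rfl⟩ := hx
            rw [hDdef, Finset.mem_preimage] at hu
            exact hu
        have hDcard : D.card ≤ l := by
          have : (D.map inle).card = D.card := Finset.card_map _
          rw [hDC'] at hC'card
          omega
        have hDclique : G.IsClique ↑D := by
          intro u hu v hv hne
          have h1 : (Sum.inl u : V ⊕ Fin m) ∈ C' := by
            rw [hDC']
            exact Finset.mem_map_of_mem _ hu
          have h2 : (Sum.inl v : V ⊕ Fin m) ∈ C' := by
            rw [hDC']
            exact Finset.mem_map_of_mem _ hv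
          have hadj := hC'clique (Finset.mem_coe.mpr h1) (Finset.mem_coe.mpr h2)
            (by simpa using hne)
          exact glue_adj_inl_inl.mp hadj
        obtain ⟨i, hi⟩ := hcov D hDcard hDclique
        refine ⟨some i, ?_⟩
        show C' ⊆ (td.bag i).map inle
        rw [hDC']
        exact Finset.map_subset_map.mpr hi
  | @iso V W G G' e hG ih =>
    classical
    obtain ⟨ι, td, hw, hcov⟩ := ih
    set emb : V ↪ W := e.toEquiv.toEmbedding with hemb
    set bag' : ι → Finset W := fun i => (td.bag i).map emb with hbag'
    have hmem' : ∀ (w : W) (i : ι), w ∈ bag' i ↔ e.symm w ∈ td.bag i := by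
      intro w i
      rw [hbag']
      simp only [Finset.mem_map, hemb, Equiv.coe_toEmbedding]
      constructor
      · rintro ⟨v, hv, rfl⟩
        simpa using hv
      · intro h
        exact ⟨e.symm w, h, by simp⟩
    refine ⟨ι, ⟨td.T, td.isTree, bag', ?_, ?_, ?_⟩, ?_, ?_⟩
    · intro w
      obtain ⟨i, hi⟩ := td.mem_bag (e.symm w)
      exact ⟨i, (hmem' w i).mpr hi⟩
    · intro u v hadj
      have hadj' : G.Adj (e.symm u) (e.symm v) := by
        rw [← e.map_rel_iff]
        simpa using hadj
      obtain ⟨i, h1, h2⟩ := td.edge_cover _ _ hadj'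
      exact ⟨i, (hmem' u i).mpr h1, (hmem' v i).mpr h2⟩
    · intro w
      have hset : {i | w ∈ bag' i} = {i | e.symm w ∈ td.bag i} := by
        ext i
        exact hmem' w i
      rw [hset]
      exact td.connected (e.symm w)
    · have hIeqW : ∀ (s t : Finset W),
          (@Inter.inter _ (@Finset.instInter _ (Classical.decEq _)) s t) = s ∩ t := by
        intro s t
        rw [Subsingleton.elim (Classical.decEq W) inferInstance]
      constructor
      · intro i
        show ((td.bag i).map emb).card ≤ k
        rw [Finset.card_map]
        exact hw.1 i
      · intro i j hne
        rw [hIeqW]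
        show (bag' i ∩ bag' j).card ≤ l
        have : bag' i ∩ bag' j = (td.bag i ∩ td.bag j).map emb := by
          ext x
          simp only [Finset.mem_inter, hmem', Finset.mem_map]
          constructor
          · rintro ⟨h1, h2⟩
            exact ⟨e.symm x, ⟨h1, h2⟩, by simp [hemb]⟩
          · rintro ⟨u, hu, rfl⟩
            constructor <;> simp [hemb, hu.1, hu.2]
        rw [this, Finset.card_map]
        exact hw.2 i j hne
    · intro C' hC'card hC'clique
      set D : Finset V := C'.image e.symm with hDdef
      have hDcard : D.card ≤ l := le_trans (Finset.card_image_le) hC'card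
      have hDclique : G.IsClique ↑D := by
        intro u hu v hv hne
        simp only [hDdef, Finset.coe_image, Set.mem_image, Finset.mem_coe] at hu hv
        obtain ⟨a, ha, rfl⟩ := hu
        obtain ⟨b, hb, rfl⟩ := hv
        have hab : a ≠ b := fun h => hne (by rw [h])
        have := hC'clique (Finset.mem_coe.mpr ha) (Finset.mem_coe.mpr hb) hab
        rw [← e.map_rel_iff]
        simpa using this
      obtain ⟨i, hi⟩ := hcov D hDcard hDclique
      refine ⟨i, ?_⟩
      intro x hx
      rw [hmem' x i]
      apply hi
      rw [hDdef]
      exact Finset.mem_image_of_mem _ hx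

lemma pullback_td {l k : ℕ} {V W : Type} [DecidableEq V] {G : SimpleGraph V}
    {T : SimpleGraph W} (f : V → W) (hf : Function.Injective f)
    (hadj : ∀ u v, G.Adj u v → T.Adj (f u) (f v)) {ι : Type} (td : TreeDecomp T ι)
    (hw : @TreeDecomp.widthLE W (Classical.decEq W) T ι td l k) :
    ∃ td' : TreeDecomp G ι, td'.widthLE l k := by
  classical
  set bag' : ι → Finset V := fun i => (td.bag i).preimage f (hf.injOn) with hbag'
  have hmem' : ∀ (v : V) (i : ι), v ∈ bag' i ↔ f v ∈ td.bag i := by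
    intro v i
    rw [hbag', Finset.mem_preimage]
  refine ⟨⟨td.T, td.isTree, bag', ?_, ?_, ?_⟩, ?_, ?_⟩
  · intro v
    obtain ⟨i, hi⟩ := td.mem_bag (f v)
    exact ⟨i, (hmem' v i).mpr hi⟩
  · intro u v huv
    obtain ⟨i, h1, h2⟩ := td.edge_cover _ _ (hadj u v huv)
    exact ⟨i, (hmem' u i).mpr h1, (hmem' v i).mpr h2⟩
  · intro v
    have hset : {i | v ∈ bag' i} = {i | f v ∈ td.bag i} := by
      ext i
      exact hmem' v i
    rw [hset]
    exact td.connected (f v)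
  · intro i
    refine le_trans (Finset.card_le_card_of_injOn f (fun x hx => ?_) hf.injOn) (hw.1 i)
    exact (hmem' x i).mp hx
  · intro i j hne
    refine le_trans (Finset.card_le_card_of_injOn f (fun x hx => ?_) hf.injOn) (hw.2 i j hne)
    simp only [Finset.mem_coe, Finset.mem_inter] at hx ⊢
    exact ⟨(hmem' x i).mp hx.1, (hmem' x j).mp hx.2⟩

end Forward

/-- a (finite) graph is a partial `(l,k)`-tree iff it has a
tree-decomposition of width `(l,k)`: every bag has at most `k` vertices and any two
distinct bags intersect in at most `l` vertices. -/
theorem partialLKTree_iff_treeDecomp {l k : ℕ} (hlk : l < k) {V : Type}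
    [Fintype V] [DecidableEq V] (G : SimpleGraph V) :
    IsPartialLKTree l k G ↔
      ∃ (ι : Type) (td : TreeDecomp G ι), td.widthLE l k := by
  constructor
  · rintro ⟨W, T, f, hT, hfinj, hfadj⟩
    obtain ⟨ι, td, hwT, -⟩ := good_of_isLKTree hlk hT
    obtain ⟨td', hw'⟩ := pullback_td f hfinj hfadj td hwT
    exact ⟨ι, td', hw'⟩
  · rintro ⟨ι, td, hw⟩
    exact reverse_dir hlk td hw
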